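/- The sequence ⟨ω + n : n ∈ ω⟩ is a reversible sequence of ordinals (the disjoint union poset ⋃_{n∈ω}(ω+n) is reversible), but the constant sequence ⟨ω : n ∈ ω⟩ of cardinals is not a reversible sequence of cardinals. -/

import Mathlib

universe u

/-- A poset is reversible iff every bijective homomorphism (monotone bijection) of it to
itself is an automorphism (i.e. its inverse is also monotone). -/
def Reversible (P : Type*) [PartialOrder P] : Prop :=
  ∀ f : P → P, Function.Bijective f → Monotone f → ∀ x y : P, f x ≤ f y → x ≤ y

/-- A sequence of (nonzero) cardinals is reversible iff there is no non-injective
surjection f : I → I such that for all j, the (cardinal) sum of κ_i over f⁻¹[{j}]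
equals κ_j. -/
def RevSeqCard {I : Type u} (κ : I → Cardinal.{u}) : Prop :=
  ¬ ∃ f : I → I, Function.Surjective f ∧ ¬ Function.Injective f ∧
      ∀ j, (Cardinal.sum fun i : f ⁻¹' {j} => κ i) = κ j

open Ordinal Set

lemma stmt15_infinite_Iio_ordinal_iff {x : Ordinal.{0}} :
    (Set.Iio x).Infinite ↔ omega0 ≤ x := by
  rw [← Set.infinite_coe_iff, Cardinal.infinite_iff, Ordinal.mk_Iio_ordinal,
    Cardinal.aleph0_le_lift, Ordinal.aleph0_le_card]

lemma stmt15_big_set_eq (n : ℕ) :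
    {x : Ordinal.{0} | omega0 ≤ x ∧ x < omega0 + n}
      = (fun k : Fin n => omega0 + (k : Ordinal)) '' Set.univ := by
  ext x
  simp only [Set.mem_setOf_eq, Set.image_univ, Set.mem_range]
  constructor
  · rintro ⟨h1, h2⟩
    have hx : omega0 + (x - omega0) = x := Ordinal.add_sub_cancel_of_le h1
    have hc : (x - omega0) < (n : Ordinal) := by
      rw [← hx] at h2
      exact (add_lt_add_iff_left _).mp h2
    obtain ⟨m, hm⟩ := Ordinal.lt_omega0.mp (hc.trans (Ordinal.nat_lt_omega0 n))
    have hmn : m < n := by rw [hm] at hc; exact_mod_cast hc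
    exact ⟨⟨m, hmn⟩, by rw [← hx, hm]⟩
  · rintro ⟨k, rfl⟩
    refine ⟨le_self_add, ?_⟩
    rw [add_lt_add_iff_left]
    exact_mod_cast k.2

lemma stmt15_ncard_big_ordinal (n : ℕ) :
    Set.ncard {x : Ordinal.{0} | omega0 ≤ x ∧ x < omega0 + n} = n := by
  rw [stmt15_big_set_eq, Set.ncard_image_of_injective _ ?_, Set.ncard_univ,
    Nat.card_eq_fintype_card, Fintype.card_fin]
  intro a b hab
  have := (add_right_inj _).mp hab
  exact Fin.ext (by exact_mod_cast this)

lemma stmt15_finite_big_ordinal (n : ℕ) :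
    Set.Finite {x : Ordinal.{0} | omega0 ≤ x ∧ x < omega0 + n} := by
  rw [stmt15_big_set_eq]
  exact (Set.finite_univ).image _

/-- The set of elements of the chain `ω + n` having infinitely many predecessors is
finite with exactly `n` elements. -/
lemma stmt15_big_toType (n : ℕ) :
    {t : (omega0 + (n : Ordinal.{0})).ToType | (Set.Iio t).Infinite}.Finite ∧
    {t : (omega0 + (n : Ordinal.{0})).ToType | (Set.Iio t).Infinite}.ncard = n := by
  set o : Ordinal.{0} := omega0 + n with ho
  set e := (Ordinal.ToType.mk (o := o))
  set A : Set (Set.Iio o) := {x | omega0 ≤ (x : Ordinal)} with hA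
  have hmem : ∀ t : o.ToType, (Set.Iio t).Infinite ↔ omega0 ≤ (e.symm t : Ordinal) := by
    intro t
    have h1 : e.symm '' (Set.Iio t) = Set.Iio (e.symm t) := e.symm.image_Iio t
    have h2 : Subtype.val '' (Set.Iio (e.symm t)) = Set.Iio ((e.symm t : Ordinal)) := by
      ext y
      simp only [Set.mem_image, Set.mem_Iio]
      constructor
      · rintro ⟨z, hz, rfl⟩; exact hz
      · intro hy
        exact ⟨⟨y, lt_trans hy (e.symm t).2⟩, by exact hy, rfl⟩
    rw [← stmt15_infinite_Iio_ordinal_iff, ← h2, ← h1]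
    rw [Set.infinite_image_iff (Subtype.val_injective.injOn),
        Set.infinite_image_iff (e.symm.injective.injOn)]
  have hBig : {t : o.ToType | (Set.Iio t).Infinite} = e '' A := by
    ext t
    simp only [Set.mem_setOf_eq, hmem]
    constructor
    · intro h; exact ⟨e.symm t, h, e.apply_symm_apply t⟩
    · rintro ⟨x, hx, rfl⟩; rwa [e.symm_apply_apply]
  have hAS : Subtype.val '' A = {x : Ordinal.{0} | omega0 ≤ x ∧ x < o} := by
    ext x
    simp only [Set.mem_image, Set.mem_setOf_eq, hA]
    constructor
    · rintro ⟨z, hz, rfl⟩; exact ⟨hz, z.2⟩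
    · rintro ⟨h1, h2⟩; exact ⟨⟨x, h2⟩, h1, rfl⟩
  have hSfin := stmt15_finite_big_ordinal n
  have hAfin : A.Finite := by
    have := hSfin.preimage (Subtype.val_injective (p := fun x => x ∈ Set.Iio o)).injOn
    apply this.subset
    intro x hx
    exact ⟨hx, x.2⟩
  constructor
  · rw [hBig]; exact hAfin.image _
  · rw [hBig, Set.ncard_image_of_injective _ e.injective, ← Set.ncard_image_of_injective _
      Subtype.val_injective, hAS, ho]
    exact stmt15_ncard_big_ordinal n

/-- ⟨ω + n : n ∈ ω⟩ is a reversible sequence of ordinals (the disjoint union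
poset ⋃_{n∈ω}(ω+n) is reversible), but the constant sequence ⟨ω : n ∈ ω⟩ is not a
reversible sequence of cardinals. -/
theorem stmt15 :
    Reversible (Σ n : ℕ, (Ordinal.omega0 + (n : Ordinal.{0})).ToType) ∧
      ¬ RevSeqCard (fun _ : ℕ => Cardinal.aleph0.{0}) := by
  constructor
  · -- Part 1: the disjoint union poset is reversible
    set P := Σ n : ℕ, (Ordinal.omega0 + (n : Ordinal.{0})).ToType with hP
    intro f hbij hmono x y hle
    -- f is strictly monotone
    have hstrict : ∀ p q : P, p < q → f p < f q := by
      intro p q h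
      exact lt_of_le_of_ne (hmono h.le) fun e => (ne_of_lt h) (hbij.1 e)
    -- each chain is nonempty
    have hne : ∀ n : ℕ, Nonempty (omega0 + (n : Ordinal.{0})).ToType := by
      intro n
      rw [Ordinal.nonempty_toType_iff]
      exact (lt_of_lt_of_le omega0_pos le_self_add).ne'
    have pt : ∀ n : ℕ, (omega0 + (n : Ordinal.{0})).ToType := fun n => (hne n).some
    -- f maps each chain into a single chain, inducing g : ℕ → ℕ
    have hcomp : ∀ (n : ℕ) (s t : (omega0 + (n : Ordinal.{0})).ToType),
        (f ⟨n, s⟩).1 = (f ⟨n, t⟩).1 := by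
      intro n s t
      rcases le_total s t with h | h
      · exact (Sigma.le_def.mp (hmono (Sigma.mk_le_mk_iff.mpr h))).1
      · exact ((Sigma.le_def.mp (hmono (Sigma.mk_le_mk_iff.mpr h))).1).symm
    set g : ℕ → ℕ := fun n => (f ⟨n, pt n⟩).1 with hgdef
    have hg : ∀ (n : ℕ) (t : (omega0 + (n : Ordinal.{0})).ToType), (f ⟨n, t⟩).1 = g n :=
      fun n t => hcomp n t (pt n)
    -- the "big" elements of P
    set Big : Set P := {p | Set.Infinite {q : P | q < p}} with hBigdef
    -- the set of predecessors of ⟨m, t⟩ is the embedded Iio t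
    have hpred : ∀ (m : ℕ) (t : (omega0 + (m : Ordinal.{0})).ToType),
        {q : P | q < ⟨m, t⟩} = Sigma.mk m '' Set.Iio t := by
      intro m t
      ext q
      simp only [Set.mem_setOf_eq, Set.mem_image, Set.mem_Iio]
      constructor
      · intro hq
        cases hq with
        | fiber i a b h => exact ⟨a, h, rfl⟩
      · rintro ⟨v, hv, rfl⟩
        exact Sigma.mk_lt_mk_iff.mpr hv
    -- Big ∩ (chain m) is the image of the chain-level big set
    have hBigFiber : ∀ m : ℕ, Big ∩ {p : P | p.1 = m}
        = Sigma.mk m '' {t : (omega0 + (m : Ordinal.{0})).ToType | (Set.Iio t).Infinite} := by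
      intro m
      ext p
      rcases p with ⟨i, u⟩
      simp only [Set.mem_inter_iff, Set.mem_setOf_eq, Set.mem_image, hBigdef]
      constructor
      · rintro ⟨hb, rfl⟩
        refine ⟨u, ?_, rfl⟩
        rw [hpred i u, Set.infinite_image_iff sigma_mk_injective.injOn] at hb
        exact hb
      · rintro ⟨t, ht, hq⟩
        obtain ⟨rfl, h2⟩ := Sigma.mk.inj_iff.mp hq
        have : t = u := by simpa using h2
        subst this
        refine ⟨?_, rfl⟩
        rw [hpred _ t, Set.infinite_image_iff sigma_mk_injective.injOn]
        exact ht
    have hBigFin : ∀ m : ℕ, (Big ∩ {p : P | p.1 = m}).Finite := by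
      intro m
      rw [hBigFiber m]
      exact (stmt15_big_toType m).1.image _
    have hBigCard : ∀ m : ℕ, (Big ∩ {p : P | p.1 = m}).ncard = m := by
      intro m
      rw [hBigFiber m, Set.ncard_image_of_injective _ sigma_mk_injective]
      exact (stmt15_big_toType m).2
    -- f maps Big into Big
    have hfBig : ∀ p : P, p ∈ Big → f p ∈ Big := by
      intro p hp
      have : f '' {q : P | q < p} ⊆ {q : P | q < f p} := by
        rintro _ ⟨q, hq, rfl⟩
        exact hstrict q p hq
      exact Set.Infinite.mono this (Set.Infinite.image hbij.1.injOn hp)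
    -- hence n ≤ g n for every n
    have hle_g : ∀ n : ℕ, n ≤ g n := by
      intro n
      have hsub : f '' (Big ∩ {p : P | p.1 = n}) ⊆ Big ∩ {p : P | p.1 = g n} := by
        rintro _ ⟨p, ⟨hb, hp1⟩, rfl⟩
        rcases p with ⟨i, u⟩
        change i = n at hp1
        subst hp1
        exact ⟨hfBig _ hb, hg _ u⟩
      calc n = (Big ∩ {p : P | p.1 = n}).ncard := (hBigCard n).symm
        _ = (f '' (Big ∩ {p : P | p.1 = n})).ncard :=
            (Set.ncard_image_of_injective _ hbij.1).symm
        _ ≤ (Big ∩ {p : P | p.1 = g n}).ncard := Set.ncard_le_ncard hsub (hBigFin _)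
        _ = g n := hBigCard _
    -- g is surjective
    have hgsurj : ∀ m : ℕ, ∃ a : ℕ, g a = m := by
      intro m
      obtain ⟨p, hp⟩ := hbij.2 ⟨m, pt m⟩
      rcases p with ⟨a, s⟩
      refine ⟨a, ?_⟩
      rw [← hg a s, hp]
    -- by induction, g is the identity
    have hgid : ∀ m a : ℕ, g a = m → a = m := by
      intro m
      induction m using Nat.strong_induction_on with
      | _ m IH =>
        intro a ha
        have h1 : a ≤ m := ha ▸ hle_g a
        rcases eq_or_lt_of_le h1 with h | h
        · exact h
        · obtain ⟨b, hb⟩ := hgsurj a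
          have hba : b = a := IH a h b hb
          rw [hba] at hb
          rw [hb] at ha
          omega
    -- conclude: f x ≤ f y implies x ≤ y
    rcases x with ⟨a, s⟩
    rcases y with ⟨b, t⟩
    have h1 : (f ⟨a, s⟩).1 = (f ⟨b, t⟩).1 := (Sigma.le_def.mp hle).1
    rw [hg a s, hg b t] at h1
    have hab : a = b := by
      have ha := hgid (g a) a rfl
      have hb := hgid (g b) b rfl
      omega
    subst hab
    rw [Sigma.mk_le_mk_iff]
    by_contra hst
    have hts : t < s := lt_of_not_ge hst
    have := hstrict ⟨a, t⟩ ⟨a, s⟩ (Sigma.mk_lt_mk_iff.mpr hts)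
    exact absurd (lt_of_le_of_lt hle this) (lt_irrefl _)
  · -- Part 2: the constant sequence ⟨ω⟩ is not a reversible sequence of cardinals
    intro h
    apply h
    refine ⟨fun n => n - 1, fun j => ⟨j + 1, rfl⟩, ?_, ?_⟩
    · intro hinj
      have := hinj (a₁ := 0) (a₂ := 1) rfl
      simp at this
    · intro j
      rw [Cardinal.sum_const']
      refine Cardinal.mul_eq_right le_rfl Cardinal.mk_le_aleph0 ?_
      rw [Cardinal.mk_ne_zero_iff]
      exact ⟨⟨j + 1, rfl⟩⟩
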